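/- There exists a Puiseux monoid that is both almost Furstenberg and nearly Furstenberg but not Furstenberg. -/
import Mathlib


/-- `a` is an atom of the Puiseux monoid `M`. -/
def IsAtomIn (M : AddSubmonoid ℚ) (a : ℚ) : Prop :=
  a ∈ M ∧ a ≠ 0 ∧ ∀ x ∈ M, ∀ y ∈ M, a = x + y → x = 0 ∨ y = 0

/-- `b` is atomic in `M`: it is `0` or a sum of atoms of `M`. -/
def AtomicIn (M : AddSubmonoid ℚ) (b : ℚ) : Prop :=
  b ∈ AddSubmonoid.closure {a | IsAtomIn M a}

/-- `x` divides `y` in `M`. -/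
def DvdIn (M : AddSubmonoid ℚ) (x y : ℚ) : Prop := y - x ∈ M

def QuasiFurstenberg (M : AddSubmonoid ℚ) : Prop :=
  ∀ b ∈ M, b ≠ 0 → ∃ c ∈ M, ∃ a, IsAtomIn M a ∧ DvdIn M a (b + c) ∧ ¬ DvdIn M a c

def QuasiAtomic (M : AddSubmonoid ℚ) : Prop :=
  ∀ b ∈ M, ∃ c ∈ M, AtomicIn M (b + c)

def AlmostFurstenberg (M : AddSubmonoid ℚ) : Prop :=
  ∀ b ∈ M, b ≠ 0 →
    ∃ c, AtomicIn M c ∧ ∃ a, IsAtomIn M a ∧ DvdIn M a (b + c) ∧ ¬ DvdIn M a c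

def NearlyFurstenberg (M : AddSubmonoid ℚ) : Prop :=
  ∃ c ∈ M, ∀ b ∈ M, b ≠ 0 → ∃ a, IsAtomIn M a ∧ DvdIn M a (b + c) ∧ ¬ DvdIn M a c

def Furstenberg (M : AddSubmonoid ℚ) : Prop :=
  ∀ b ∈ M, b ≠ 0 → ∃ a, IsAtomIn M a ∧ DvdIn M a b

def Antimatter (M : AddSubmonoid ℚ) : Prop := ∀ a, ¬ IsAtomIn M a

def AtomicMonoid (M : AddSubmonoid ℚ) : Prop := ∀ b ∈ M, AtomicIn M b

def NearlyAtomic (M : AddSubmonoid ℚ) : Prop :=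
  ∃ c ∈ M, ∀ b ∈ M, b ≠ 0 → AtomicIn M (b + c)

def AlmostAtomic (M : AddSubmonoid ℚ) : Prop :=
  ∀ b ∈ M, ∃ c, AtomicIn M c ∧ AtomicIn M (b + c)


namespace Stmt11

/-- dyadic rational -/
def IsDy (x : ℚ) : Prop := ∃ (n : ℕ) (a : ℤ), x * 2 ^ n = a

/-- five-adic rational -/
def IsFive (x : ℚ) : Prop := ∃ (n : ℕ) (a : ℤ), x * 5 ^ n = a

lemma isDy_zero : IsDy 0 := ⟨0, 0, by norm_num⟩
lemma isFive_zero : IsFive 0 := ⟨0, 0, by norm_num⟩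
lemma isDy_int (m : ℤ) : IsDy (m : ℚ) := ⟨0, m, by norm_num⟩
lemma isFive_int (m : ℤ) : IsFive (m : ℚ) := ⟨0, m, by norm_num⟩

lemma IsDy.add {x y : ℚ} (hx : IsDy x) (hy : IsDy y) : IsDy (x + y) := by
  obtain ⟨n, a, ha⟩ := hx; obtain ⟨m, b, hb⟩ := hy
  refine ⟨n + m, a * 2 ^ m + b * 2 ^ n, ?_⟩
  have : (x + y) * 2 ^ (n + m) = (x * 2 ^ n) * 2 ^ m + (y * 2 ^ m) * 2 ^ n := by
    rw [pow_add]; ring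
  rw [this, ha, hb]; push_cast; ring

lemma IsDy.sub {x y : ℚ} (hx : IsDy x) (hy : IsDy y) : IsDy (x - y) := by
  obtain ⟨n, a, ha⟩ := hx; obtain ⟨m, b, hb⟩ := hy
  refine ⟨n + m, a * 2 ^ m - b * 2 ^ n, ?_⟩
  have : (x - y) * 2 ^ (n + m) = (x * 2 ^ n) * 2 ^ m - (y * 2 ^ m) * 2 ^ n := by
    rw [pow_add]; ring
  rw [this, ha, hb]; push_cast; ring

lemma IsDy.int_mul {x : ℚ} (m : ℤ) (hx : IsDy x) : IsDy ((m : ℚ) * x) := by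
  obtain ⟨n, a, ha⟩ := hx
  exact ⟨n, m * a, by rw [mul_assoc, ha]; push_cast; ring⟩

lemma IsDy.half {x : ℚ} (hx : IsDy x) : IsDy (x / 2) := by
  obtain ⟨n, a, ha⟩ := hx
  exact ⟨n + 1, a, by rw [pow_add]; field_simp; linarith [ha]⟩

lemma IsFive.add {x y : ℚ} (hx : IsFive x) (hy : IsFive y) : IsFive (x + y) := by
  obtain ⟨n, a, ha⟩ := hx; obtain ⟨m, b, hb⟩ := hy
  refine ⟨n + m, a * 5 ^ m + b * 5 ^ n, ?_⟩
  have : (x + y) * 5 ^ (n + m) = (x * 5 ^ n) * 5 ^ m + (y * 5 ^ m) * 5 ^ n := by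
    rw [pow_add]; ring
  rw [this, ha, hb]; push_cast; ring

lemma IsFive.sub {x y : ℚ} (hx : IsFive x) (hy : IsFive y) : IsFive (x - y) := by
  obtain ⟨n, a, ha⟩ := hx; obtain ⟨m, b, hb⟩ := hy
  refine ⟨n + m, a * 5 ^ m - b * 5 ^ n, ?_⟩
  have : (x - y) * 5 ^ (n + m) = (x * 5 ^ n) * 5 ^ m - (y * 5 ^ m) * 5 ^ n := by
    rw [pow_add]; ring
  rw [this, ha, hb]; push_cast; ring

lemma IsFive.int_mul {x : ℚ} (m : ℤ) (hx : IsFive x) : IsFive ((m : ℚ) * x) := by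
  obtain ⟨n, a, ha⟩ := hx
  exact ⟨n, m * a, by rw [mul_assoc, ha]; push_cast; ring⟩

/-- a rational that is both dyadic and five-adic is an integer -/
lemma exists_int_of_isFive_isDy {z : ℚ} (h5 : IsFive z) (h2 : IsDy z) :
    ∃ m : ℤ, z = m := by
  obtain ⟨n, a, ha⟩ := h5; obtain ⟨k, b, hb⟩ := h2
  have hq : (a : ℚ) * 2 ^ k = (b : ℚ) * 5 ^ n := by
    rw [← ha, ← hb]; ring
  have hz : a * 2 ^ k = b * 5 ^ n := by exact_mod_cast hq
  have hdvd : (5 : ℤ) ^ n ∣ a * 2 ^ k := ⟨b, by linarith⟩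
  have hcop : IsCoprime ((5 : ℤ) ^ n) ((2 : ℤ) ^ k) :=
    IsCoprime.pow (Int.isCoprime_iff_gcd_eq_one.mpr (by decide))
  obtain ⟨c, hc⟩ := hcop.dvd_of_dvd_mul_right hdvd
  refine ⟨c, ?_⟩
  have h5ne : ((5 : ℚ) ^ n) ≠ 0 := by positivity
  have : z * 5 ^ n = (c : ℚ) * 5 ^ n := by
    rw [ha]; rw [hc]; push_cast; ring
  exact mul_right_cancel₀ h5ne this

/-- five-adic z with 3z an integer is an integer -/
lemma exists_int_of_isFive_three {z : ℚ} (h5 : IsFive z) {m : ℤ}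
    (hm : 3 * z = (m : ℚ)) : ∃ m' : ℤ, z = m' := by
  obtain ⟨n, a, ha⟩ := h5
  have hq : (m : ℚ) * 5 ^ n = 3 * a := by rw [← hm, ← ha]; ring
  have hz : m * 5 ^ n = 3 * a := by exact_mod_cast hq
  have hp : Prime (3 : ℤ) := by norm_num
  have hdvd : (3 : ℤ) ∣ m * 5 ^ n := ⟨a, hz⟩
  rcases hp.dvd_mul.mp hdvd with h | h
  · obtain ⟨t, ht⟩ := h
    refine ⟨t, ?_⟩
    have : (3 : ℚ) * z = 3 * t := by rw [hm, ht]; push_cast; ring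
    linarith
  · exfalso
    have := hp.dvd_of_dvd_pow h
    norm_num at this

/-- dyadic z with 3z an integer is an integer -/
lemma exists_int_of_isDy_three {z : ℚ} (h2 : IsDy z) {m : ℤ}
    (hm : 3 * z = (m : ℚ)) : ∃ m' : ℤ, z = m' := by
  obtain ⟨n, a, ha⟩ := h2
  have hq : (m : ℚ) * 2 ^ n = 3 * a := by rw [← hm, ← ha]; ring
  have hz : m * 2 ^ n = 3 * a := by exact_mod_cast hq
  have hp : Prime (3 : ℤ) := by norm_num
  have hdvd : (3 : ℤ) ∣ m * 2 ^ n := ⟨a, hz⟩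
  rcases hp.dvd_mul.mp hdvd with h | h
  · obtain ⟨t, ht⟩ := h
    refine ⟨t, ?_⟩
    have : (3 : ℚ) * z = 3 * t := by rw [hm, ht]; push_cast; ring
    linarith
  · exfalso
    have := hp.dvd_of_dvd_pow h
    norm_num at this


/-- The carrier of our monoid. -/
def Mcar : Set ℚ :=
  {x | ∃ k : ℕ, ∃ Q d : ℚ, IsFive Q ∧ IsDy d ∧ 0 ≤ Q ∧ 0 ≤ d ∧
      x = (k : ℚ) / 3 + Q + d ∧ (Q = 0 → k = 0 ∨ 0 < d) ∧ (0 < Q → Q < (k : ℚ))}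

def MM : AddSubmonoid ℚ where
  carrier := Mcar
  zero_mem' := ⟨0, 0, 0, isFive_zero, isDy_zero, le_refl 0, le_refl 0, by norm_num,
      fun _ => Or.inl rfl, fun h => absurd h (lt_irrefl 0)⟩
  add_mem' := by
    rintro x y ⟨k, Q, d, h5, h2, hQ, hd, he, hs1, hs2⟩
      ⟨k', Q', d', h5', h2', hQ', hd', he', hs1', hs2'⟩
    refine ⟨k + k', Q + Q', d + d', h5.add h5', h2.add h2',
      by linarith, by linarith, ?_, ?_, ?_⟩
    · rw [he, he']; push_cast; ring
    · intro h
      have hQ0 : Q = 0 := by linarith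
      have hQ'0 : Q' = 0 := by linarith
      rcases hs1 hQ0 with h1 | h1
      · rcases hs1' hQ'0 with h2_ | h2_
        · exact Or.inl (by omega)
        · exact Or.inr (by linarith)
      · exact Or.inr (by linarith)
    · intro h
      push_cast
      have hk0 : (0 : ℚ) ≤ (k : ℚ) := by positivity
      have hk'0 : (0 : ℚ) ≤ (k' : ℚ) := by positivity
      rcases lt_or_eq_of_le hQ with h1 | h1
      · rcases lt_or_eq_of_le hQ' with h1' | h1'
        · have := hs2 h1; have := hs2' h1'; linarith
        · have := hs2 h1; linarith
      · rcases lt_or_eq_of_le hQ' with h1' | h1'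
        · have := hs2' h1'; linarith
        · exfalso; rw [← h1, ← h1'] at h; norm_num at h

lemma mem_MM {x : ℚ} :
    x ∈ MM ↔ ∃ k : ℕ, ∃ Q d : ℚ, IsFive Q ∧ IsDy d ∧ 0 ≤ Q ∧ 0 ≤ d ∧
      x = (k : ℚ) / 3 + Q + d ∧ (Q = 0 → k = 0 ∨ 0 < d) ∧ (0 < Q → Q < (k : ℚ)) :=
  Iff.rfl

lemma MM_nonneg : ∀ x ∈ MM, (0 : ℚ) ≤ x := by
  rintro x ⟨k, Q, d, _, _, hQ, hd, he, _, _⟩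
  rw [he]
  positivity


lemma atom_aux {q : ℚ} (h5 : IsFive q) (h0 : 0 < q) (h1 : q < 1) :
    IsAtomIn MM (1 / 3 + q) := by
  refine ⟨⟨1, q, 0, h5, isDy_zero, le_of_lt h0, le_refl 0, by norm_num,
      fun h => absurd h (ne_of_gt h0), fun _ => by norm_num; exact h1⟩,
    by positivity, ?_⟩
  rintro x ⟨k, Q, d, hx5, hx2, hxQ, hxd, hxe, hxs1, hxs2⟩
    y ⟨k', Q', d', hy5, hy2, hyQ, hyd, hye, hys1, hys2⟩ hxy
  have hsum : 1 / 3 + q = (k : ℚ) / 3 + Q + d + ((k' : ℚ) / 3 + Q' + d') := by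
    rw [← hxe, ← hye]; exact hxy
  -- F = Q + Q' - q is five-adic,  D = d + d' dyadic
  have hF5 : IsFive (Q + Q' - q) := (hx5.add hy5).sub h5
  have hD2 : IsDy (d + d') := hx2.add hy2
  have h3F : 3 * (Q + Q' - q) = ((1 - (k : ℤ) - k' : ℤ) : ℚ) - 3 * (d + d') := by
    push_cast; linarith
  have h3F5 : IsFive (3 * (Q + Q' - q)) := by
    have := hF5.int_mul 3; push_cast at this; exact this
  have h3F2 : IsDy (3 * (Q + Q' - q)) := by
    rw [h3F]
    refine (isDy_int _).sub ?_
    have := hD2.int_mul 3; push_cast at this; exact this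
  obtain ⟨m, hm⟩ := exists_int_of_isFive_isDy h3F5 h3F2
  obtain ⟨m₁, hm₁⟩ := exists_int_of_isFive_three hF5 hm
  have h3D : 3 * (d + d') = ((1 - (k : ℤ) - k' - 3 * m₁ : ℤ) : ℚ) := by
    rw [hm₁] at h3F; push_cast at h3F ⊢; linarith
  obtain ⟨m₂, hm₂⟩ := exists_int_of_isDy_three hD2 h3D
  -- integer bounds
  have hb1 : (-1 : ℤ) < m₁ := by
    have : (-1 : ℚ) < (m₁ : ℚ) := by rw [← hm₁]; linarith
    exact_mod_cast this
  have hb2 : (0 : ℤ) ≤ m₂ := by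
    have : (0 : ℚ) ≤ (m₂ : ℚ) := by rw [← hm₂]; linarith
    exact_mod_cast this
  have heqZ : 3 * m₁ + 3 * m₂ = 1 - (k : ℤ) - (k' : ℤ) := by
    have : 3 * (m₁ : ℚ) + 3 * (m₂ : ℚ) = 1 - (k : ℚ) - (k' : ℚ) := by
      rw [← hm₁, ← hm₂]; linarith
    exact_mod_cast this
  have hkk : k + k' = 1 ∧ m₂ = 0 := by
    constructor <;> omega
  have hd0 : d = 0 ∧ d' = 0 := by
    have : d + d' = 0 := by
      have h0 : ((m₂ : ℤ) : ℚ) = 0 := by exact_mod_cast hkk.2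
      linarith [hm₂, h0]
    constructor <;> linarith
  rcases Nat.eq_zero_or_pos k with hk | hk
  · -- x = 0
    left
    have hk' :  (k : ℚ) = 0 := by exact_mod_cast hk
    have hQ0 : Q = 0 := by
      by_contra hne
      have hpos : 0 < Q := lt_of_le_of_ne hxQ (Ne.symm hne)
      have := hxs2 hpos
      rw [hk'] at this; linarith
    rw [hxe, hk', hQ0, hd0.1]; norm_num
  · -- k = 1, k' = 0, y = 0
    right
    have hk'0 : k' = 0 := by omega
    have hk'q : (k' : ℚ) = 0 := by exact_mod_cast hk'0
    have hQ'0 : Q' = 0 := by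
      by_contra hne
      have hpos : 0 < Q' := lt_of_le_of_ne hyQ (Ne.symm hne)
      have := hys2 hpos
      rw [hk'q] at this; linarith
    rw [hye, hk'q, hQ'0, hd0.2]; norm_num


lemma two_thirds_not_mem : (2 / 3 : ℚ) ∉ MM := by
  rintro ⟨k, Q, d, h5, h2, hQ, hd, he, hs1, hs2⟩
  have h3Q : 3 * Q = ((2 - (k : ℤ) : ℤ) : ℚ) - 3 * d := by push_cast; linarith
  have h3Q5 : IsFive (3 * Q) := by
    have := h5.int_mul 3; push_cast at this; exact this
  have h3Q2 : IsDy (3 * Q) := by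
    rw [h3Q]
    refine (isDy_int _).sub ?_
    have := h2.int_mul 3; push_cast at this; exact this
  obtain ⟨m, hm⟩ := exists_int_of_isFive_isDy h3Q5 h3Q2
  obtain ⟨m₁, hm₁⟩ := exists_int_of_isFive_three h5 hm
  have hkd : (0:ℚ) ≤ (k:ℚ) := by positivity
  have hm₁0 : m₁ = 0 := by
    have l1 : (0 : ℚ) ≤ (m₁ : ℚ) := by rw [← hm₁]; exact hQ
    have l2 : (m₁ : ℚ) < 1 := by rw [← hm₁]; linarith
    have l1' : (0 : ℤ) ≤ m₁ := by exact_mod_cast l1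
    have l2' : (m₁ : ℤ) < 1 := by exact_mod_cast l2
    omega
  have hQ0 : Q = 0 := by rw [hm₁, hm₁0]; norm_num
  have h3d : 3 * d = ((2 - (k : ℤ) : ℤ) : ℚ) := by rw [hQ0] at he; push_cast; linarith
  obtain ⟨m₂, hm₂⟩ := exists_int_of_isDy_three h2 h3d
  have hZ : 3 * m₂ = 2 - (k : ℤ) := by
    have : 3 * (m₂ : ℚ) = ((2 - (k : ℤ) : ℤ) : ℚ) := by rw [← hm₂]; exact h3d
    exact_mod_cast this
  rcases hs1 hQ0 with hk0 | hdpos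
  · rw [hk0] at hZ; omega
  · have : (0 : ℤ) < m₂ := by
      have : (0 : ℚ) < (m₂ : ℚ) := by rw [← hm₂]; exact hdpos
      exact_mod_cast this
    omega

lemma add_two_thirds {b : ℚ} (hb : b ∈ MM) (hb0 : b ≠ 0) : b + 2 / 3 ∈ MM := by
  obtain ⟨k, Q, d, h5, h2, hQ, hd, he, hs1, hs2⟩ := hb
  refine ⟨k + 2, Q, d, h5, h2, hQ, hd, ?_, ?_, ?_⟩
  · rw [he]; push_cast; ring
  · intro hQ0
    right
    rcases hs1 hQ0 with hk0 | hd0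
    · have : b = d := by rw [he, hk0, hQ0]; norm_num
      rcases lt_or_eq_of_le hd with h | h
      · exact h
      · exfalso; exact hb0 (by rw [this, ← h])
    · exact hd0
  · intro h
    have := hs2 h
    push_cast
    linarith

lemma c_mem : (8 / 5 : ℚ) ∈ MM := by
  refine ⟨3, 3 / 5, 0, ⟨1, 3, by norm_num⟩, isDy_zero, by norm_num, le_refl 0,
    by norm_num, fun h => by norm_num at h, fun _ => by norm_num⟩

lemma half_mem : (1 / 2 : ℚ) ∈ MM := by
  refine ⟨0, 0, 1 / 2, isFive_zero, ⟨1, 1, by norm_num⟩, le_refl 0, by norm_num,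
    by norm_num, fun _ => Or.inr (by norm_num), fun h => absurd h (lt_irrefl 0)⟩

lemma atom_8_15 : IsAtomIn MM (8 / 15) := by
  have h := atom_aux (q := 1 / 5) ⟨1, 1, by norm_num⟩ (by norm_num) (by norm_num)
  have e : (8 / 15 : ℚ) = 1 / 3 + 1 / 5 := by norm_num
  rw [e]; exact h

lemma atom_14_15 : IsAtomIn MM (14 / 15) := by
  have h := atom_aux (q := 3 / 5) ⟨1, 3, by norm_num⟩ (by norm_num) (by norm_num)
  have e : (14 / 15 : ℚ) = 1 / 3 + 3 / 5 := by norm_num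
  rw [e]; exact h

lemma atomic_c : AtomicIn MM (8 / 5) := by
  unfold AtomicIn
  have h1 : (8 / 15 : ℚ) ∈ {a | IsAtomIn MM a} := atom_8_15
  have h2 := AddSubmonoid.subset_closure h1
  have : (8 / 5 : ℚ) = 8 / 15 + (8 / 15 + 8 / 15) := by norm_num
  rw [this]
  exact add_mem h2 (add_mem h2 h2)

lemma dvd_shift {b : ℚ} (hb : b ∈ MM) (hb0 : b ≠ 0) :
    DvdIn MM (14 / 15) (b + 8 / 5) := by
  unfold DvdIn
  have : b + 8 / 5 - 14 / 15 = b + 2 / 3 := by ring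
  rw [this]
  exact add_two_thirds hb hb0

lemma not_dvd_c : ¬ DvdIn MM (14 / 15) (8 / 5) := by
  unfold DvdIn
  have : (8 / 5 : ℚ) - 14 / 15 = 2 / 3 := by norm_num
  rw [this]
  exact two_thirds_not_mem

lemma notF : ¬ Furstenberg MM := by
  intro h
  obtain ⟨a, ⟨haM, ha0, hdec⟩, hdvd⟩ := h (1 / 2) half_mem (by norm_num)
  obtain ⟨k, Q, d, h5, h2, hQ, hd, he, hs1, hs2⟩ := haM
  obtain ⟨k', Q', d', h5', h2', hQ', hd', he', hs1', hs2'⟩ := hdvd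
  have hsum : (1 / 2 : ℚ) = (k : ℚ) / 3 + Q + d + ((k' : ℚ) / 3 + Q' + d') := by
    rw [← he, ← he']; ring
  have hF5 : IsFive (Q + Q') := h5.add h5'
  have hD2 : IsDy (d + d') := h2.add h2'
  have h3F : 3 * (Q + Q') = (3 / 2 - ((k : ℤ) + k' : ℤ)) - 3 * (d + d') := by
    push_cast; linarith
  have h3F5 : IsFive (3 * (Q + Q')) := by
    have := hF5.int_mul 3; push_cast at this; exact this
  have h3F2 : IsDy (3 * (Q + Q')) := by
    rw [h3F]
    refine IsDy.sub (IsDy.sub ⟨1, 3, by norm_num⟩ (isDy_int _)) ?_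
    have := hD2.int_mul 3; push_cast at this; exact this
  obtain ⟨m, hm⟩ := exists_int_of_isFive_isDy h3F5 h3F2
  obtain ⟨m₁, hm₁⟩ := exists_int_of_isFive_three hF5 hm
  have hm₁0 : m₁ = 0 := by
    have l1 : (0 : ℚ) ≤ (m₁ : ℚ) := by rw [← hm₁]; linarith
    have l2 : (m₁ : ℚ) < 1 := by
      rw [← hm₁]
      have : (0:ℚ) ≤ (k:ℚ) := by positivity
      have : (0:ℚ) ≤ (k':ℚ) := by positivity
      linarith
    have l1' : (0 : ℤ) ≤ m₁ := by exact_mod_cast l1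
    have l2' : (m₁ : ℤ) < 1 := by exact_mod_cast l2
    omega
  have hQQ : Q + Q' = 0 := by rw [hm₁, hm₁0]; norm_num
  have hQ0 : Q = 0 := by linarith
  have hQ'0 : Q' = 0 := by linarith
  -- now 1/2 = (k+k')/3 + (d+d')
  have hDD2 : IsDy (2 * (d + d')) := by
    have := hD2.int_mul 2; push_cast at this; exact this
  have h3DD : 3 * (2 * (d + d')) = ((3 - 2 * ((k : ℤ) + k') : ℤ) : ℚ) := by
    rw [hQ0, hQ'0] at hsum; push_cast; linarith
  obtain ⟨m₂, hm₂⟩ := exists_int_of_isDy_three hDD2 h3DD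
  have hZ : 3 * m₂ = 3 - 2 * ((k : ℤ) + k') := by
    have : 3 * (m₂ : ℚ) = ((3 - 2 * ((k : ℤ) + k') : ℤ) : ℚ) := by rw [← hm₂]; exact h3DD
    exact_mod_cast this
  have hm₂0 : (0 : ℤ) ≤ m₂ := by
    have : (0 : ℚ) ≤ (m₂ : ℚ) := by rw [← hm₂]; linarith
    exact_mod_cast this
  have hk0 : k = 0 ∧ k' = 0 := by
    constructor <;> omega
  -- so a = d, dyadic positive
  have had : a = d := by
    rw [he, hk0.1, hQ0]; norm_num
  have hdpos : 0 < d := by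
    rcases lt_or_eq_of_le hd with h' | h'
    · exact h'
    · exfalso; exact ha0 (by rw [had, ← h'])
  have hhalfmem : d / 2 ∈ MM := by
    refine ⟨0, 0, d / 2, isFive_zero, h2.half, le_refl 0, by linarith,
      by norm_num, fun _ => Or.inr (by linarith), fun h' => absurd h' (lt_irrefl 0)⟩
  have := hdec (d / 2) hhalfmem (d / 2) hhalfmem (by rw [had]; ring)
  rcases this with h' | h' <;>
    · have hdz : d = 0 := by linarith
      linarith

end Stmt11

/-- There is a Puiseux monoid that is both almost Furstenberg and nearly
Furstenberg but not Furstenberg. -/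
theorem stmt_11 :
    ∃ M : AddSubmonoid ℚ, (∀ x ∈ M, 0 ≤ x) ∧
      AlmostFurstenberg M ∧ NearlyFurstenberg M ∧ ¬ Furstenberg M := by
  refine ⟨Stmt11.MM, Stmt11.MM_nonneg, ?_, ?_, Stmt11.notF⟩
  · intro b hb hb0
    exact ⟨8 / 5, Stmt11.atomic_c, 14 / 15, Stmt11.atom_14_15,
      Stmt11.dvd_shift hb hb0, Stmt11.not_dvd_c⟩
  · exact ⟨8 / 5, Stmt11.c_mem, fun b hb hb0 => ⟨14 / 15, Stmt11.atom_14_15,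
      Stmt11.dvd_shift hb hb0, Stmt11.not_dvd_c⟩⟩
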